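/- Let (E, ‖·‖) be a real Banach space, γ ∈ (0,1), and T : E → E a γ-contraction (‖T[q] − T[q']‖ ≤ γ‖q − q'‖ for all q, q' ∈ E) with fixed point q* = T[q*]. Let q₀ ∈ E and let q : [0,∞) → E be continuous and satisfy the integral equation q(t) = q₀ + ∫₀ᵗ (T[q(s)] − q(s)) ds (Bochner integral) for all t ≥ 0. Then for all t ≥ 0, ‖q(t) − q*‖ ≤ e^{−(1−γ)t} ‖q₀ − q*‖; i.e., the fixed point q* is globally exponentially stable for the semiflow of the ODE q̇ = T[q] − q. -/

import Mathlib

/-- global exponential stability of the fixed point, Banach-space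
ODE: if `T : E → E` is a `γ`-contraction with fixed point `q*` and
`q(t) = q₀ + ∫₀ᵗ (T[q(s)] − q(s)) ds` (Bochner integral) for all `t ≥ 0`, then
`‖q(t) − q*‖ ≤ e^{−(1−γ)t} ‖q₀ − q*‖` for all `t ≥ 0`. -/
theorem banach_ode_exponential_stability
    {E : Type*} [NormedAddCommGroup E] [NormedSpace ℝ E] [CompleteSpace E]
    (γ : ℝ) (hγ0 : 0 < γ) (hγ1 : γ < 1)
    (T : E → E) (hT : ∀ q q' : E, ‖T q - T q'‖ ≤ γ * ‖q - q'‖)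
    (qstar : E) (hfix : T qstar = qstar)
    (q : ℝ → E) (hqcont : ContinuousOn q (Set.Ici (0 : ℝ)))
    (hq : ∀ t : ℝ, 0 ≤ t → q t = q 0 + ∫ s in (0 : ℝ)..t, (T (q s) - q s)) :
    ∀ t : ℝ, 0 ≤ t →
      ‖q t - qstar‖ ≤ Real.exp (-(1 - γ) * t) * ‖q 0 - qstar‖ := by
  intro t ht
  -- T is continuous (Lipschitz)
  have hTcont : Continuous T := by
    have : LipschitzWith (Real.toNNReal γ) T := by
      apply LipschitzWith.of_dist_le_mul
      intro x y
      rw [dist_eq_norm, dist_eq_norm, Real.coe_toNNReal γ hγ0.le]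
      exact hT x y
    exact this.continuous
  set g : ℝ → E := fun s => T (q s) - q s with hg
  have hgcont : ContinuousOn g (Set.Ici (0 : ℝ)) :=
    (hTcont.comp_continuousOn hqcont).sub hqcont
  -- right derivative of q on [0, ∞)
  have hderiv : ∀ x ∈ Set.Ico (0 : ℝ) t, HasDerivWithinAt q (g x) (Set.Ici x) x := by
    intro x hx
    have hx0 : (0 : ℝ) ≤ x := hx.1
    have hint : IntervalIntegrable g MeasureTheory.volume 0 x := by
      apply ContinuousOn.intervalIntegrable
      exact hgcont.mono (by rw [Set.uIcc_of_le hx0]; exact fun y hy => hy.1)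
    have hmeas : StronglyMeasurableAtFilter g (nhdsWithin x (Set.Ioi x)) := by
      refine ⟨Set.Ici 0, Filter.mem_of_superset self_mem_nhdsWithin
        (fun y hy => le_trans hx0 (le_of_lt hy)), hgcont.aestronglyMeasurable measurableSet_Ici⟩
    have hcw : ContinuousWithinAt g (Set.Ioi x) x :=
      ((hgcont x hx0).mono (Set.Ici_subset_Ici.2 hx0)).mono Set.Ioi_subset_Ici_self
    have hFTC : HasDerivWithinAt (fun u => ∫ s in (0:ℝ)..u, g s) (g x) (Set.Ici x) x :=
      intervalIntegral.integral_hasDerivWithinAt_right hint hmeas hcw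
    have := hFTC.const_add (q 0)
    refine this.congr (fun y hy => ?_) ?_
    · exact hq y (le_trans hx0 hy)
    · exact hq x hx0
  -- consider f s = exp s • (q s - qstar)
  set f : ℝ → E := fun s => Real.exp s • (q s - qstar) with hf
  have hfderiv : ∀ x ∈ Set.Ico (0 : ℝ) t,
      HasDerivWithinAt f (Real.exp x • (T (q x) - T qstar)) (Set.Ici x) x := by
    intro x hx
    have h1 : HasDerivWithinAt (fun s : ℝ => Real.exp s) (Real.exp x) (Set.Ici x) x :=
      (Real.hasDerivAt_exp x).hasDerivWithinAt
    have h2 : HasDerivWithinAt (fun s => q s - qstar) (g x) (Set.Ici x) x :=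
      (hderiv x hx).sub_const qstar
    have := h1.smul h2
    convert this using 1
    · rfl
    rw [hfix, hg]
    simp only [smul_sub]
    abel
  have hfcont : ContinuousOn f (Set.Icc (0 : ℝ) t) := by
    apply ContinuousOn.smul
    · exact Real.continuous_exp.continuousOn
    · exact (hqcont.mono (fun y hy => hy.1)).sub continuousOn_const
  have hbound : ∀ x ∈ Set.Ico (0 : ℝ) t,
      ‖Real.exp x • (T (q x) - T qstar)‖ ≤ γ * ‖f x‖ + 0 := by
    intro x hx
    rw [add_zero, norm_smul, hf]
    simp only [norm_smul, Real.norm_eq_abs, abs_of_pos (Real.exp_pos x)]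
    calc Real.exp x * ‖T (q x) - T qstar‖ ≤ Real.exp x * (γ * ‖q x - qstar‖) := by
          exact mul_le_mul_of_nonneg_left (hT _ _) (Real.exp_pos x).le
      _ = γ * (Real.exp x * ‖q x - qstar‖) := by ring
  have ha : ‖f 0‖ ≤ ‖q 0 - qstar‖ := by
    rw [hf]; simp
  have key := norm_le_gronwallBound_of_norm_deriv_right_le hfcont hfderiv
    ha hbound t (Set.mem_Icc.2 ⟨ht, le_refl t⟩)
  rw [gronwallBound_ε0, sub_zero, hf] at key
  simp only [norm_smul, Real.norm_eq_abs, abs_of_pos (Real.exp_pos t)] at key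
  have hexp : Real.exp (-(1 - γ) * t) * ‖q 0 - qstar‖ =
      (‖q 0 - qstar‖ * Real.exp (γ * t)) / Real.exp t := by
    rw [eq_div_iff (Real.exp_pos t).ne', mul_comm (Real.exp (-(1-γ)*t)) _, mul_assoc,
      ← Real.exp_add]
    ring_nf
  rw [hexp, le_div_iff₀ (Real.exp_pos t)]
  linarith [key]
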